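/- Let V be a nonempty finite set and let u, w, h : V × V → ℝ satisfy: 0 ≤ u_{xy} ≤ 1 and u_{xy} + u_{yx} = 1 for all distinct x, y; u_{xy} + u_{yz} + u_{zx} ≥ 1 for all distinct x, y, z; w_{xx} = 0, w_{xy} ≥ 0, and w_{xy} + w_{yz} ≥ w_{xz} for all distinct x, y, z; h_{xy} ∈ {0,1}, h_{xy} + h_{yx} = 1, and h_{xy} = 1 implies u_{xy} ≥ 1/2, for all distinct x, y. For each v ∈ V let P_v = {(x, y) : x, y ∈ V \ {v}, x ≠ y, h_{vx} = 1 and h_{yv} = 1}, and define A_v = ∑_{x ≠ v} (h_{xv}·w_{vx} + h_{vx}·w_{xv}) + ∑_{(x,y) ∈ P_v} w_{xy} and B_v = ∑_{x ≠ v} (u_{xv}·w_{vx} + u_{vx}·w_{xv}) + ∑_{(x,y) ∈ P_v} (u_{xy}·w_{yx} + u_{yx}·w_{xy}). Then ∑_{v ∈ V} A_v ≤ 2·∑_{v ∈ V} B_v. -/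
import Mathlib

lemma cyc_key (wxy wyv wvx wyx wvy wxv p p' q q' r r' : ℝ)
    (h1 : 0 ≤ wyx) (h2 : 0 ≤ wvy) (h3 : 0 ≤ wxv)
    (t1 : wxy ≤ wxv + wvy) (t2 : wyv ≤ wyx + wxv) (t3 : wvx ≤ wvy + wyx)
    (hp : 1/2 ≤ p) (hq : 1/2 ≤ q) (hr : 1/2 ≤ r)
    (hp' : p + p' = 1) (hq' : q + q' = 1) (hr' : r + r' = 1)
    (hs : 1 ≤ p' + q' + r') :
    wxy + wyv + wvx ≤
      2 * ((p * wyx + p' * wxy) + (q * wvy + q' * wyv) + (r * wxv + r' * wvx)) := by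
  have W0 : 0 ≤ wyx + wvy + wxv := by linarith
  nlinarith [mul_nonneg (by linarith : (0:ℝ) ≤ 2*p-1) (by linarith : (0:ℝ) ≤ wyx + wvy + wxv - wxy),
    mul_nonneg (by linarith : (0:ℝ) ≤ 2*q-1) (by linarith : (0:ℝ) ≤ wyx + wvy + wxv - wyv),
    mul_nonneg (by linarith : (0:ℝ) ≤ 2*r-1) (by linarith : (0:ℝ) ≤ wyx + wvy + wxv - wvx),
    mul_nonneg (by linarith : (0:ℝ) ≤ 2*p-1) h1,
    mul_nonneg (by linarith : (0:ℝ) ≤ 2*q-1) h2,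
    mul_nonneg (by linarith : (0:ℝ) ≤ 2*r-1) h3,
    mul_nonneg (by linarith : (0:ℝ) ≤ p' + q' + r' - 1) W0]

/-- Summed pivot-cost bound for mmKT-Conv rounding: the total rounding cost
`∑_v A_v` is at most twice the total LP cost `∑_v B_v`. -/
theorem sum_pivot_cost_le {ι : Type*} [DecidableEq ι]
    (V : Finset ι) (hV : V.Nonempty)
    (u w h : ι → ι → ℝ)
    (hu01 : ∀ x ∈ V, ∀ y ∈ V, x ≠ y → 0 ≤ u x y ∧ u x y ≤ 1)
    (hu_sum : ∀ x ∈ V, ∀ y ∈ V, x ≠ y → u x y + u y x = 1)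
    (hu_tri : ∀ x ∈ V, ∀ y ∈ V, ∀ z ∈ V, x ≠ y → y ≠ z → x ≠ z →
      1 ≤ u x y + u y z + u z x)
    (hw_diag : ∀ x ∈ V, w x x = 0)
    (hw0 : ∀ x ∈ V, ∀ y ∈ V, x ≠ y → 0 ≤ w x y)
    (hw_tri : ∀ x ∈ V, ∀ y ∈ V, ∀ z ∈ V, x ≠ y → y ≠ z → x ≠ z →
      w x z ≤ w x y + w y z)
    (hh01 : ∀ x ∈ V, ∀ y ∈ V, x ≠ y → h x y = 0 ∨ h x y = 1)
    (hh_sum : ∀ x ∈ V, ∀ y ∈ V, x ≠ y → h x y + h y x = 1)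
    (hhu : ∀ x ∈ V, ∀ y ∈ V, x ≠ y → h x y = 1 → 1 / 2 ≤ u x y)
    (P : ι → Finset (ι × ι))
    (hP : ∀ v, ∀ p : ι × ι, p ∈ P v ↔
      p.1 ∈ V ∧ p.2 ∈ V ∧ p.1 ≠ v ∧ p.2 ≠ v ∧ p.1 ≠ p.2 ∧
        h v p.1 = 1 ∧ h p.2 v = 1)
    (A B : ι → ℝ)
    (hA : ∀ v ∈ V, A v =
      (∑ x ∈ V.erase v, (h x v * w v x + h v x * w x v)) +
        ∑ p ∈ P v, w p.1 p.2)
    (hB : ∀ v ∈ V, B v =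
      (∑ x ∈ V.erase v, (u x v * w v x + u v x * w x v)) +
        ∑ p ∈ P v, (u p.1 p.2 * w p.2 p.1 + u p.2 p.1 * w p.1 p.2)) :
    ∑ v ∈ V, A v ≤ 2 * ∑ v ∈ V, B v := by
  classical
  -- the "defect" of a pair
  set D : ι × ι → ℝ :=
    fun p => w p.1 p.2 - 2 * (u p.1 p.2 * w p.2 p.1 + u p.2 p.1 * w p.1 p.2) with hD
  -- the set of cyclic triples
  set Sc : Finset (ι × ι × ι) := (V ×ˢ V ×ˢ V).filter
    (fun t => t.2.1 ≠ t.1 ∧ t.2.2 ≠ t.1 ∧ t.2.1 ≠ t.2.2 ∧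
      h t.1 t.2.1 = 1 ∧ h t.2.2 t.1 = 1 ∧ h t.2.1 t.2.2 = 1) with hSc
  have hmem : ∀ t : ι × ι × ι, t ∈ Sc ↔
      t.1 ∈ V ∧ t.2.1 ∈ V ∧ t.2.2 ∈ V ∧ t.2.1 ≠ t.1 ∧ t.2.2 ≠ t.1 ∧ t.2.1 ≠ t.2.2 ∧
      h t.1 t.2.1 = 1 ∧ h t.2.2 t.1 = 1 ∧ h t.2.1 t.2.2 = 1 := by
    intro t
    simp only [hSc, Finset.mem_filter, Finset.mem_product]
    tauto
  -- rotation preserves Sc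
  have hrot : ∀ t ∈ Sc, ((t.2.1, t.2.2, t.1) : ι × ι × ι) ∈ Sc := by
    intro t ht
    rw [hmem] at ht
    obtain ⟨hv, hx, hy, c1, c2, c3, c4, c5, c6⟩ := ht
    rw [hmem]
    exact ⟨hx, hy, hv, Ne.symm c3, Ne.symm c1, c2, c6, c4, c5⟩
  have hrot2 : ∀ t ∈ Sc, ((t.2.2, t.1, t.2.1) : ι × ι × ι) ∈ Sc := by
    intro t ht
    exact hrot _ (hrot _ ht)
  -- rotation invariance of sums over Sc
  have e1 : ∑ t ∈ Sc, D t.2 = ∑ t ∈ Sc, D (t.2.2, t.1) := by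
    refine Finset.sum_bij' (fun t _ => ((t.2.2, t.1, t.2.1) : ι × ι × ι))
      (fun t _ => ((t.2.1, t.2.2, t.1) : ι × ι × ι)) hrot2 hrot
      (fun a ha => rfl) (fun a ha => rfl) (fun a ha => rfl)
  have e2 : ∑ t ∈ Sc, D t.2 = ∑ t ∈ Sc, D (t.1, t.2.1) := by
    refine Finset.sum_bij' (fun t _ => ((t.2.1, t.2.2, t.1) : ι × ι × ι))
      (fun t _ => ((t.2.2, t.1, t.2.1) : ι × ι × ι)) hrot hrot2
      (fun a ha => rfl) (fun a ha => rfl) (fun a ha => rfl)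
  -- the cyclic sum is nonpositive
  have hcycsum : ∑ t ∈ Sc, D t.2 ≤ 0 := by
    have h3 : (3:ℝ) * ∑ t ∈ Sc, D t.2
        = ∑ t ∈ Sc, (D t.2 + D (t.2.2, t.1) + D (t.1, t.2.1)) := by
      rw [Finset.sum_add_distrib, Finset.sum_add_distrib, ← e1, ← e2]; ring
    have h4 : ∑ t ∈ Sc, (D t.2 + D (t.2.2, t.1) + D (t.1, t.2.1)) ≤ 0 := by
      refine Finset.sum_nonpos ?_
      intro t ht
      rw [hmem] at ht
      obtain ⟨hv, hx, hy, c1, c2, c3, c4, c5, c6⟩ := ht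
      obtain ⟨v, x, y⟩ := t
      simp only at hv hx hy c1 c2 c3 c4 c5 c6
      simp only [hD]
      have key := cyc_key (w x y) (w y v) (w v x) (w y x) (w v y) (w x v)
        (u x y) (u y x) (u y v) (u v y) (u v x) (u x v)
        (hw0 y hy x hx (Ne.symm c3)) (hw0 v hv y hy (Ne.symm c2)) (hw0 x hx v hv c1)
        (hw_tri x hx v hv y hy c1 (Ne.symm c2) c3)
        (hw_tri y hy x hx v hv (Ne.symm c3) c1 c2)
        (hw_tri v hv y hy x hx (Ne.symm c2) (Ne.symm c3) (Ne.symm c1))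
        (hhu x hx y hy c3 c6) (hhu y hy v hv c2 c5) (hhu v hv x hx (Ne.symm c1) c4)
        (hu_sum x hx y hy c3) (hu_sum y hy v hv c2) (hu_sum v hv x hx (Ne.symm c1))
        (by have := hu_tri y hy x hx v hv (Ne.symm c3) c1 c2; linarith)
      linarith
    linarith
  -- reindex the cyclic sum as a double sum over pivots
  have hreindex : ∑ t ∈ Sc, D t.2
      = ∑ v ∈ V, ∑ p ∈ (P v).filter (fun p => h p.1 p.2 = 1), D p := by
    rw [hSc, Finset.sum_filter, Finset.sum_product]
    refine Finset.sum_congr rfl ?_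
    intro v hv
    rw [← Finset.sum_filter]
    refine Finset.sum_congr ?_ (fun p _ => rfl)
    ext p
    simp only [Finset.mem_filter, Finset.mem_product, hP]
    tauto
  -- the transitive part is termwise nonpositive
  have hTrans : ∀ v, ∑ p ∈ (P v).filter (fun p => ¬ h p.1 p.2 = 1), D p ≤ 0 := by
    intro v
    refine Finset.sum_nonpos ?_
    intro p hp
    rw [Finset.mem_filter, hP] at hp
    obtain ⟨⟨hx, hy, _, _, hxy, _, _⟩, hpn⟩ := hp
    have h0 : h p.1 p.2 = 0 := (hh01 p.1 hx p.2 hy hxy).resolve_right hpn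
    have hsum := hh_sum p.1 hx p.2 hy hxy
    have h1 : h p.2 p.1 = 1 := by linarith
    have hu := hhu p.2 hy p.1 hx (Ne.symm hxy) h1
    have hw1 := hw0 p.1 hx p.2 hy hxy
    have hw2 := hw0 p.2 hy p.1 hx (Ne.symm hxy)
    have hu0 := (hu01 p.1 hx p.2 hy hxy).1
    simp only [hD]
    nlinarith
  -- erase-part bound
  have hF : ∀ v ∈ V, (∑ x ∈ V.erase v, (h x v * w v x + h v x * w x v))
      ≤ 2 * ∑ x ∈ V.erase v, (u x v * w v x + u v x * w x v) := by
    intro v hv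
    rw [Finset.mul_sum]
    refine Finset.sum_le_sum ?_
    intro x hx
    have hxV := Finset.mem_of_mem_erase hx
    have hxv : x ≠ v := Finset.ne_of_mem_erase hx
    have key : ∀ a ∈ V, ∀ b ∈ V, a ≠ b → h a b * w b a ≤ 2 * (u a b * w b a) := by
      intro a ha b hb hab
      have hwba := hw0 b hb a ha (Ne.symm hab)
      rcases hh01 a ha b hb hab with h0 | h1
      · rw [h0]
        have := (hu01 a ha b hb hab).1
        nlinarith
      · have := hhu a ha b hb hab h1
        rw [h1]
        nlinarith
    have k1 := key x hxV v hv hxv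
    have k2 := key v hv x hxV (Ne.symm hxv)
    nlinarith
  -- pair-part bound per pivot
  have hPair : ∀ v ∈ V, ∑ p ∈ P v, D p ≤ ∑ p ∈ (P v).filter (fun p => h p.1 p.2 = 1), D p := by
    intro v hv
    have := Finset.sum_filter_add_sum_filter_not (P v) (fun p => h p.1 p.2 = 1) D
    have h2 := hTrans v
    linarith
  -- combine
  have hAB : ∀ v ∈ V, A v - 2 * B v ≤ ∑ p ∈ (P v).filter (fun p => h p.1 p.2 = 1), D p := by
    intro v hv
    rw [hA v hv, hB v hv]
    have hDsum : ∑ p ∈ P v, D p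
        = (∑ p ∈ P v, w p.1 p.2)
          - 2 * ∑ p ∈ P v, (u p.1 p.2 * w p.2 p.1 + u p.2 p.1 * w p.1 p.2) := by
      rw [Finset.mul_sum, ← Finset.sum_sub_distrib]
    have h1 := hF v hv
    have h2 := hPair v hv
    linarith
  have htot : ∑ v ∈ V, (A v - 2 * B v) ≤ 0 := by
    calc ∑ v ∈ V, (A v - 2 * B v)
        ≤ ∑ v ∈ V, ∑ p ∈ (P v).filter (fun p => h p.1 p.2 = 1), D p :=
          Finset.sum_le_sum hAB
      _ = ∑ t ∈ Sc, D t.2 := hreindex.symm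
      _ ≤ 0 := hcycsum
  rw [Finset.sum_sub_distrib, ← Finset.mul_sum] at htot
  linarith
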